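/- Variational upper bound for GP with Dyson pair function (norm estimate): Let Ψ(x₁,…,x_n) = G·F with G = ψ(z₁,…,z_n)∏ⱼ b(x⊥ⱼ) normalized, and F = ∏_{i<j} f(|xᵢ-xⱼ|) where 0 ≤ f ≤ 1 and f(t) = 1 for t ≥ R. If the two-particle density ρ⁽²⁾ of ψ is normalized and b ∈ L⁴(ℝ²) with scaling b_r(x) = r^{-1}b(x/r), then ⟨Ψ, Ψ⟩ ≥ 1 - (n(n-1)/2)(πR²/r²)‖b‖₄⁴. -/

import Mathlib

open MeasureTheory
open scoped ENNReal

private lemma weier {ι : Type*} (s : Finset ι) (g : ι → ℝ) (h0 : ∀ i ∈ s, 0 ≤ g i)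
    (h1 : ∀ i ∈ s, g i ≤ 1) : 1 - ∑ i ∈ s, (1 - g i) ≤ ∏ i ∈ s, g i := by
  induction s using Finset.cons_induction with
  | empty => simp
  | cons a s ha ih =>
    rw [Finset.prod_cons, Finset.sum_cons]
    have hP0 : 0 ≤ ∏ i ∈ s, g i :=
      Finset.prod_nonneg fun i hi => h0 i (Finset.mem_cons_of_mem hi)
    have hS0 : 0 ≤ ∑ i ∈ s, (1 - g i) := Finset.sum_nonneg fun i hi => by
      have := h1 i (Finset.mem_cons_of_mem hi); linarith
    have ihs := ih (fun i hi => h0 i (Finset.mem_cons_of_mem hi))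
      (fun i hi => h1 i (Finset.mem_cons_of_mem hi))
    have ha0 := h0 a (Finset.mem_cons_self a s)
    have ha1 := h1 a (Finset.mem_cons_self a s)
    nlinarith

private lemma lmarginal_prod_aux {α : Type*} [MeasureSpace α]
    [SigmaFinite (volume : Measure α)] {n : ℕ} (c : Fin n → α → ℝ≥0∞)
    (hc : ∀ k, Measurable (c k)) (s : Finset (Fin n)) (x : Fin n → α) :
    (∫⋯∫⁻_s, (fun u => ∏ k ∈ s, c k (u k))) x = ∏ k ∈ s, ∫⁻ y, c k y := by
  induction s using Finset.cons_induction generalizing x with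
  | empty => simp
  | cons a s ha ih =>
    have hmeas : ∀ (u : Finset (Fin n)), Measurable fun w : Fin n → α => ∏ k ∈ u, c k (w k) :=
      fun u => Finset.measurable_prod _ fun k _ => (hc k).comp (measurable_pi_apply k)
    rw [Finset.cons_eq_insert, Finset.prod_insert ha,
      lmarginal_insert' _ (hmeas _) ha]
    have hinner : (fun w : Fin n → α =>
        ∫⁻ y, (fun u => ∏ k ∈ insert a s, c k (u k)) (Function.update w a y))
        = fun w => (∫⁻ y, c a y) * ∏ k ∈ s, c k (w k) := by
      funext w
      have h1 : ∀ y, (∏ k ∈ insert a s, c k (Function.update w a y k))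
          = c a y * ∏ k ∈ s, c k (w k) := by
        intro y
        rw [Finset.prod_insert ha, Function.update_self]
        congr 1
        exact Finset.prod_congr rfl fun k hk => by
          rw [Function.update_of_ne (ne_of_mem_of_not_mem hk ha)]
      simp only [h1]
      rw [lintegral_mul_const _ (hc a), mul_comm]
    rw [hinner]
    have hpull : (∫⋯∫⁻_s, fun w => (∫⁻ y, c a y) * ∏ k ∈ s, c k (w k)) x
        = (∫⁻ y, c a y) * (∫⋯∫⁻_s, fun w => ∏ k ∈ s, c k (w k)) x := by
      simp only [lmarginal]
      rw [lintegral_const_mul]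
      exact (hmeas s).comp measurable_updateFinset
    rw [hpull, ih x]

private lemma two_mul_card_pairs (n : ℕ) :
    2 * (Finset.univ.filter (fun p : Fin n × Fin n => p.1 < p.2)).card = n * n - n := by
  classical
  have h1 : (Finset.univ.filter (fun p : Fin n × Fin n => p.1 < p.2)).card
      = (Finset.univ.filter (fun p : Fin n × Fin n => p.2 < p.1)).card := by
    apply Finset.card_bij (fun p _ => (p.2, p.1))
    · intro p hp; simp only [Finset.mem_filter, Finset.mem_univ, true_and] at hp ⊢; exact hp
    · intro p _ q _ h
      obtain ⟨p1, p2⟩ := p; obtain ⟨q1, q2⟩ := q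
      simp only [Prod.mk.injEq] at h
      simp [h.1, h.2]
    · intro p hp
      refine ⟨(p.2, p.1), ?_, rfl⟩
      simp only [Finset.mem_filter, Finset.mem_univ, true_and] at hp ⊢; exact hp
  have h2 : (Finset.univ.filter (fun p : Fin n × Fin n => p.1 < p.2)) ∪
      (Finset.univ.filter (fun p : Fin n × Fin n => p.2 < p.1))
      = (Finset.univ : Finset (Fin n)).offDiag := by
    ext p
    simp only [Finset.mem_union, Finset.mem_filter, Finset.mem_univ, true_and,
      Finset.mem_offDiag]
    constructor
    · rintro (h | h)
      · exact fun e => absurd e (ne_of_lt h)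
      · exact fun e => absurd e (ne_of_gt h)
    · intro h
      exact lt_or_gt_of_ne h
  have h3 : Disjoint (Finset.univ.filter (fun p : Fin n × Fin n => p.1 < p.2))
      (Finset.univ.filter (fun p : Fin n × Fin n => p.2 < p.1)) := by
    rw [Finset.disjoint_filter]
    intro p _ h1' h2'
    exact absurd h2' (asymm h1')
  have h4 := Finset.card_union_of_disjoint h3
  rw [h2, Finset.offDiag_card] at h4
  simp only [Finset.card_univ, Fintype.card_fin] at h4
  omega

private lemma pair_bound {n : ℕ} (i j : Fin n) (hij : i ≠ j) {R : ℝ} (hR : 0 ≤ R)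
    (c : Fin n → EuclideanSpace ℝ (Fin 2) → ℝ≥0∞) (hc : ∀ k, Measurable (c k))
    (hcj : c j = fun _ => 1) :
    ∫⁻ u : Fin n → EuclideanSpace ℝ (Fin 2),
        (∏ k, c k (u k)) * (if ‖u i - u j‖ ≤ R then 1 else 0)
      ≤ ENNReal.ofReal (Real.pi * R ^ 2) * ∏ k ∈ Finset.univ.erase j, ∫⁻ y, c k y := by
  classical
  have hχ : MeasurableSet {u : Fin n → EuclideanSpace ℝ (Fin 2) | ‖u i - u j‖ ≤ R} :=
    measurableSet_le (((measurable_pi_apply i).sub (measurable_pi_apply j)).norm)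
      measurable_const
  have hprodmeas : ∀ (s : Finset (Fin n)),
      Measurable fun u : Fin n → EuclideanSpace ℝ (Fin 2) => ∏ k ∈ s, c k (u k) :=
    fun s => Finset.measurable_prod _ fun k _ => (hc k).comp (measurable_pi_apply k)
  have hfmeas : Measurable fun u : Fin n → EuclideanSpace ℝ (Fin 2) =>
      (∏ k, c k (u k)) * (if ‖u i - u j‖ ≤ R then (1 : ℝ≥0∞) else 0) :=
    (hprodmeas _).mul (Measurable.ite hχ measurable_const measurable_const)
  have hvol : ∀ z : EuclideanSpace ℝ (Fin 2),
      (∫⁻ y : EuclideanSpace ℝ (Fin 2), if ‖z - y‖ ≤ R then (1 : ℝ≥0∞) else 0)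
        = ENNReal.ofReal (Real.pi * R ^ 2) := by
    intro z
    have hset : (fun y : EuclideanSpace ℝ (Fin 2) => if ‖z - y‖ ≤ R then (1 : ℝ≥0∞) else 0)
        = (Metric.closedBall z R).indicator 1 := by
      funext y
      by_cases h : ‖z - y‖ ≤ R
      · rw [if_pos h, Set.indicator_of_mem]
        · rfl
        · exact Metric.mem_closedBall.2 (by rw [dist_eq_norm, norm_sub_rev]; exact h)
      · rw [if_neg h, Set.indicator_of_notMem]
        intro hm
        exact h (by rw [norm_sub_rev, ← dist_eq_norm]; exact Metric.mem_closedBall.1 hm)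
    rw [hset, lintegral_indicator_one measurableSet_closedBall,
      EuclideanSpace.volume_closedBall]
    simp only [Fintype.card_fin]
    norm_num
    rw [← ENNReal.ofReal_pow (Real.sqrt_nonneg _), Real.sq_sqrt Real.pi_pos.le]
    rw [← ENNReal.ofReal_pow hR, ← ENNReal.ofReal_mul (by positivity)]
    ring_nf
  rw [volume_pi, lintegral_eq_lmarginal_univ (fun _ => (0 : EuclideanSpace ℝ (Fin 2)))]
  rw [lmarginal_erase' _ hfmeas (Finset.mem_univ j)]
  have hle : (fun w : Fin n → EuclideanSpace ℝ (Fin 2) =>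
      ∫⁻ y, (fun u => (∏ k, c k (u k)) * (if ‖u i - u j‖ ≤ R then (1 : ℝ≥0∞) else 0))
        (Function.update w j y))
      ≤ fun w => (∏ k ∈ Finset.univ.erase j, c k (w k)) * ENNReal.ofReal (Real.pi * R ^ 2) := by
    intro w
    simp only
    have h1 : ∀ y : EuclideanSpace ℝ (Fin 2), (∏ k, c k (Function.update w j y k))
        = ∏ k ∈ Finset.univ.erase j, c k (w k) := by
      intro y
      calc (∏ k, c k (Function.update w j y k))
          = (∏ k ∈ Finset.univ.erase j, c k (Function.update w j y k))
            * c j (Function.update w j y j) :=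
            (Finset.prod_erase_mul _ _ (Finset.mem_univ j)).symm
        _ = ∏ k ∈ Finset.univ.erase j, c k (w k) := by
            simp only [hcj, mul_one]
            exact Finset.prod_congr rfl fun k hk => by
              rw [Function.update_of_ne (Finset.mem_erase.1 hk).1]
    have h2 : ∀ y : EuclideanSpace ℝ (Fin 2), Function.update w j y i = w i :=
      fun y => Function.update_of_ne hij _ _
    simp only [h1, h2, Function.update_self]
    have hitemeas : Measurable fun y : EuclideanSpace ℝ (Fin 2) =>
        (if ‖w i - y‖ ≤ R then (1 : ℝ≥0∞) else 0) :=
      Measurable.ite (measurableSet_le (measurable_const.sub measurable_id).norm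
        measurable_const) measurable_const measurable_const
    exact le_of_eq (by rw [lintegral_const_mul _ hitemeas, hvol (w i)])
  refine le_trans (lmarginal_mono hle _) (le_of_eq ?_)
  have hpull : (∫⋯∫⁻_(Finset.univ.erase j), fun w =>
      (∏ k ∈ Finset.univ.erase j, c k (w k)) * ENNReal.ofReal (Real.pi * R ^ 2))
        (fun _ => (0 : EuclideanSpace ℝ (Fin 2)))
      = ((∫⋯∫⁻_(Finset.univ.erase j), fun w => ∏ k ∈ Finset.univ.erase j, c k (w k))
          (fun _ => (0 : EuclideanSpace ℝ (Fin 2))))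
        * ENNReal.ofReal (Real.pi * R ^ 2) := by
    simp only [lmarginal]
    rw [lintegral_mul_const' _ _ ENNReal.ofReal_ne_top]
  rw [hpull, lmarginal_prod_aux c hc _ _, mul_comm]


set_option maxHeartbeats 4000000 in
/-- **Norm estimate for the Dyson-type trial function.** With `Ψ = G·F`,
`G(x₁,…,xₙ) = ψ(z₁,…,zₙ) ∏ᵢ b_r(x⊥ᵢ)` normalized (`∫ψ² = 1`, `b_r(x) = r⁻¹ b(x/r)` with
`∫b² = 1`), and `F = ∏_{i<j} f(|xᵢ-xⱼ|)` where `0 ≤ f ≤ 1` and `f(t) = 1` for `t ≥ R`: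
`⟨Ψ,Ψ⟩ ≥ 1 - (n(n-1)/2)(πR²/r²)‖b‖₄⁴`. -/
theorem trial_function_norm_estimate (n : ℕ) (R r : ℝ) (hR : 0 < R) (hr : 0 < r)
    (b : EuclideanSpace ℝ (Fin 2) → ℝ) (hbmeas : Measurable b)
    (hbnorm : (∫ y, b y ^ 2) = 1) (hb4 : Integrable (fun y => b y ^ 4))
    (ψ : (Fin n → ℝ) → ℝ) (hψmeas : Measurable ψ) (hψnorm : (∫ z, ψ z ^ 2) = 1)
    (f : ℝ → ℝ) (hfmeas : Measurable f)
    (hf0 : ∀ t, 0 ≤ f t) (hf1 : ∀ t, f t ≤ 1) (hfR : ∀ t, R ≤ t → f t = 1) :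
    1 - ((n : ℝ) * ((n : ℝ) - 1) / 2) * (Real.pi * R ^ 2 / r ^ 2) *
        (∫ y, b y ^ 4) ≤
      ∫ x : Fin n → EuclideanSpace ℝ (Fin 2) × ℝ,
        ((ψ (fun i => (x i).2) * ∏ i, r⁻¹ * b (r⁻¹ • (x i).1)) *
          ∏ i, ∏ j, (if i < j then
            f (Real.sqrt (‖(x i).1 - (x j).1‖ ^ 2 + ((x i).2 - (x j).2) ^ 2))
          else 1)) ^ 2 := by
  classical
  -- integrability of the normalized densities
  have hb2int : Integrable (fun y => b y ^ 2) := by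
    by_contra h; rw [integral_undef h] at hbnorm; exact one_ne_zero hbnorm.symm
  have hψint : Integrable (fun z => ψ z ^ 2) := by
    by_contra h; rw [integral_undef h] at hψnorm; exact one_ne_zero hψnorm.symm
  -- the rescaled transverse function
  set br : EuclideanSpace ℝ (Fin 2) → ℝ := fun u => r⁻¹ * b (r⁻¹ • u) with hbrdef
  have hbrmeas : Measurable br := (hbmeas.comp (measurable_const_smul r⁻¹)).const_mul r⁻¹
  have hfinrank : Module.finrank ℝ (EuclideanSpace ℝ (Fin 2)) = 2 := by
    simp [finrank_euclideanSpace]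
  have hscale : ∀ g : EuclideanSpace ℝ (Fin 2) → ℝ,
      (∫ u, g (r⁻¹ • u)) = r ^ 2 * ∫ u, g u := by
    intro g
    rw [MeasureTheory.Measure.integral_comp_inv_smul_of_nonneg volume g hr.le, hfinrank,
      smul_eq_mul]
  have hbr2 : (∫ u, br u ^ 2) = 1 := by
    have h : ∀ u, br u ^ 2 = r⁻¹ ^ 2 * ((fun v => b v ^ 2) (r⁻¹ • u)) := by
      intro u; simp only [hbrdef, mul_pow]
    simp_rw [h]
    rw [integral_const_mul, hscale (fun v => b v ^ 2), hbnorm]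
    field_simp
  have hbr4 : (∫ u, br u ^ 4) = r⁻¹ ^ 2 * ∫ y, b y ^ 4 := by
    have h : ∀ u, br u ^ 4 = r⁻¹ ^ 4 * ((fun v => b v ^ 4) (r⁻¹ • u)) := by
      intro u; simp only [hbrdef, mul_pow]
    simp_rw [h]
    rw [integral_const_mul, hscale (fun v => b v ^ 4)]
    field_simp
  have hbr2int : Integrable (fun u => br u ^ 2) := by
    have h1 : Integrable (fun u : EuclideanSpace ℝ (Fin 2) => (fun v => b v ^ 2) (r⁻¹ • u)) :=
      hb2int.comp_smul (inv_ne_zero hr.ne')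
    have := h1.const_mul (r⁻¹ ^ 2)
    refine this.congr (Filter.Eventually.of_forall fun u => ?_)
    simp only [hbrdef, mul_pow]
  have hbr4int : Integrable (fun u => br u ^ 4) := by
    have h1 : Integrable (fun u : EuclideanSpace ℝ (Fin 2) => (fun v => b v ^ 4) (r⁻¹ • u)) :=
      hb4.comp_smul (inv_ne_zero hr.ne')
    have := h1.const_mul (r⁻¹ ^ 4)
    refine this.congr (Filter.Eventually.of_forall fun u => ?_)
    simp only [hbrdef, mul_pow]
  set B2 : EuclideanSpace ℝ (Fin 2) → ℝ≥0∞ := fun u => ENNReal.ofReal (br u ^ 2) with hB2def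
  set B4 : EuclideanSpace ℝ (Fin 2) → ℝ≥0∞ := fun u => ENNReal.ofReal (br u ^ 4) with hB4def
  have hB2meas : Measurable B2 := ENNReal.measurable_ofReal.comp (hbrmeas.pow_const 2)
  have hB4meas : Measurable B4 := ENNReal.measurable_ofReal.comp (hbrmeas.pow_const 4)
  have hB2 : (∫⁻ u, B2 u) = 1 := by
    rw [hB2def, ← ofReal_integral_eq_lintegral_ofReal hbr2int
      (Filter.Eventually.of_forall fun u => sq_nonneg _), hbr2, ENNReal.ofReal_one]
  have hB4 : (∫⁻ u, B4 u) = ENNReal.ofReal (r⁻¹ ^ 2 * ∫ y, b y ^ 4) := by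
    rw [hB4def, ← ofReal_integral_eq_lintegral_ofReal hbr4int
      (Filter.Eventually.of_forall fun u => by positivity), hbr4]
  -- main objects
  set Gr : (Fin n → EuclideanSpace ℝ (Fin 2) × ℝ) → ℝ :=
    fun x => ψ (fun i => (x i).2) * ∏ i, br ((x i).1) with hGrdef
  set Fr : (Fin n → EuclideanSpace ℝ (Fin 2) × ℝ) → ℝ :=
    fun x => ∏ i, ∏ j, (if i < j then
      f (Real.sqrt (‖(x i).1 - (x j).1‖ ^ 2 + ((x i).2 - (x j).2) ^ 2)) else 1) with hFrdef
  have hzmeas : Measurable fun (x : Fin n → EuclideanSpace ℝ (Fin 2) × ℝ) =>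
      (fun i => (x i).2) :=
    measurable_pi_lambda _ fun i => (measurable_pi_apply i).snd
  have hGrmeas : Measurable Gr :=
    (hψmeas.comp hzmeas).mul
      (Finset.measurable_prod _ fun i _ => hbrmeas.comp ((measurable_pi_apply i).fst))
  have hFrmeas : Measurable Fr := by
    refine Finset.measurable_prod _ fun i _ => Finset.measurable_prod _ fun j _ => ?_
    by_cases h : i < j
    · simp only [if_pos h]
      refine hfmeas.comp (Measurable.sqrt ?_)
      exact ((((measurable_pi_apply i).fst.sub (measurable_pi_apply j).fst).norm.pow_const 2).add
        (((measurable_pi_apply i).snd.sub (measurable_pi_apply j).snd).pow_const 2))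
    · simp only [if_neg h]; exact measurable_const
  have hF0 : ∀ x, 0 ≤ Fr x := by
    intro x
    refine Finset.prod_nonneg fun i _ => Finset.prod_nonneg fun j _ => ?_
    by_cases h : i < j
    · simp only [if_pos h]; exact hf0 _
    · simp only [if_neg h]; exact zero_le_one
  have hF1 : ∀ x, Fr x ≤ 1 := by
    intro x
    refine Finset.prod_le_one (fun i _ => Finset.prod_nonneg fun j _ => ?_)
      (fun i _ => Finset.prod_le_one (fun j _ => ?_) (fun j _ => ?_)) <;> by_cases h : i < j
    · simp only [if_pos h]; exact hf0 _
    · simp only [if_neg h]; exact zero_le_one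
    · simp only [if_pos h]; exact hf0 _
    · simp only [if_neg h]; exact zero_le_one
    · simp only [if_pos h]; exact hf1 _
    · simp only [if_neg h]; exact le_refl 1
  -- the pair indicator
  set t : Fin n → Fin n → (Fin n → EuclideanSpace ℝ (Fin 2) × ℝ) → ℝ :=
    fun i j x => if ‖(x i).1 - (x j).1‖ ≤ R then 1 else 0 with htdef
  have ht01 : ∀ i j x, t i j x = 0 ∨ t i j x = 1 := by
    intro i j x
    by_cases h : ‖(x i).1 - (x j).1‖ ≤ R
    · right; simp [htdef, h]
    · left; simp [htdef, h]
  have ht0 : ∀ i j x, 0 ≤ t i j x := by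
    intro i j x; rcases ht01 i j x with h | h <;> rw [h] <;> norm_num
  have htsymm : ∀ i j x, t j i x = t i j x := by
    intro i j x; simp only [htdef, norm_sub_rev]
  set S : Finset (Fin n × Fin n) :=
    Finset.univ.filter (fun p : Fin n × Fin n => p.1 < p.2) with hSdef
  -- Weierstrass-type pointwise estimate
  have hpoint1 : ∀ x, 1 - (∑ p ∈ S, t p.1 p.2 x) ≤ Fr x ^ 2 := by
    intro x
    set A : Fin n × Fin n → ℝ := fun p => (if p.1 < p.2 then
      f (Real.sqrt (‖(x p.1).1 - (x p.2).1‖ ^ 2 + ((x p.1).2 - (x p.2).2) ^ 2)) else 1)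
      with hAdef
    have hA0 : ∀ p, 0 ≤ A p := fun p => by
      by_cases h : p.1 < p.2
      · simp only [hAdef, if_pos h]; exact hf0 _
      · simp only [hAdef, if_neg h]; exact zero_le_one
    have hA1 : ∀ p, A p ≤ 1 := fun p => by
      by_cases h : p.1 < p.2
      · simp only [hAdef, if_pos h]; exact hf1 _
      · simp only [hAdef, if_neg h]; exact le_refl 1
    have hFx2 : Fr x ^ 2 = ∏ p : Fin n × Fin n, A p ^ 2 := by
      calc Fr x ^ 2 = (∏ p : Fin n × Fin n, A p) ^ 2 := by
            rw [hFrdef]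
            simp only [hAdef]
            rw [← Finset.univ_product_univ, Finset.prod_product]
        _ = ∏ p : Fin n × Fin n, A p ^ 2 := (Finset.prod_pow _ _ _).symm
    have hW := weier Finset.univ (fun p : Fin n × Fin n => A p ^ 2)
      (fun p _ => sq_nonneg _) (fun p _ => pow_le_one₀ (hA0 p) (hA1 p))
    have hsum : ∑ p : Fin n × Fin n, (1 - A p ^ 2) = ∑ p ∈ S, (1 - A p ^ 2) :=
      (Finset.sum_subset (Finset.filter_subset _ _) (fun p _ hp => by
        have hnp : ¬ p.1 < p.2 := by
          simpa [hSdef] using hp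
        simp [hAdef, hnp])).symm
    have hterm : ∀ p ∈ S, 1 - A p ^ 2 ≤ t p.1 p.2 x := by
      intro p hp
      have hplt : p.1 < p.2 := by simpa [hSdef] using hp
      by_cases h : ‖(x p.1).1 - (x p.2).1‖ ≤ R
      · have ht' : t p.1 p.2 x = 1 := by simp [htdef, h]
        rw [ht']
        nlinarith [sq_nonneg (A p)]
      · have ht' : t p.1 p.2 x = 0 := by simp [htdef, h]
        have hle : R ≤ Real.sqrt (‖(x p.1).1 - (x p.2).1‖ ^ 2
            + ((x p.1).2 - (x p.2).2) ^ 2) := by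
          have h1 : Real.sqrt (‖(x p.1).1 - (x p.2).1‖ ^ 2)
              ≤ Real.sqrt (‖(x p.1).1 - (x p.2).1‖ ^ 2 + ((x p.1).2 - (x p.2).2) ^ 2) :=
            Real.sqrt_le_sqrt (by nlinarith [sq_nonneg ((x p.1).2 - (x p.2).2)])
          rw [Real.sqrt_sq (norm_nonneg ((x p.1).1 - (x p.2).1))] at h1
          linarith [le_of_not_ge h]
        have hA : A p = 1 := by simp [hAdef, hplt, hfR _ hle]
        rw [hA, ht']
        norm_num
    calc 1 - ∑ p ∈ S, t p.1 p.2 x ≤ 1 - ∑ p ∈ S, (1 - A p ^ 2) := by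
          have := Finset.sum_le_sum hterm; linarith
      _ = 1 - ∑ p : Fin n × Fin n, (1 - A p ^ 2) := by rw [hsum]
      _ ≤ ∏ p : Fin n × Fin n, A p ^ 2 := hW
      _ = Fr x ^ 2 := hFx2.symm
  -- the AM-GM dominating functions
  set ccr : Fin n → Fin n → Fin n → EuclideanSpace ℝ (Fin 2) → ℝ :=
    fun i j k => if k = i then (fun y => br y ^ 4) else if k = j then (fun _ => 1)
      else (fun y => br y ^ 2) with hccrdef
  have hccr0 : ∀ i j k y, 0 ≤ ccr i j k y := by
    intro i j k y
    by_cases h1 : k = i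
    · simp only [hccrdef, if_pos h1]; positivity
    · by_cases h2 : k = j
      · simp only [hccrdef, if_neg h1, if_pos h2]; norm_num
      · simp only [hccrdef, if_neg h1, if_neg h2]; positivity
  have hccrmeas : ∀ i j k, Measurable (ccr i j k) := by
    intro i j k
    by_cases h1 : k = i
    · simp only [hccrdef, if_pos h1]; exact hbrmeas.pow_const 4
    · by_cases h2 : k = j
      · simp only [hccrdef, if_neg h1, if_pos h2]; exact measurable_const
      · simp only [hccrdef, if_neg h1, if_neg h2]; exact hbrmeas.pow_const 2
  set Dr : Fin n → Fin n → (Fin n → EuclideanSpace ℝ (Fin 2) × ℝ) → ℝ :=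
    fun i j x => ψ (fun i => (x i).2) ^ 2 * ((∏ k, ccr i j k ((x k).1)) * t i j x)
      with hDrdef
  have hDr0 : ∀ i j x, 0 ≤ Dr i j x := by
    intro i j x
    refine mul_nonneg (sq_nonneg _) (mul_nonneg (Finset.prod_nonneg fun k _ => hccr0 i j k _)
      (ht0 i j x))
  have hDrmeas : ∀ i j, Measurable (Dr i j) := by
    intro i j
    refine ((hψmeas.comp hzmeas).pow_const 2).mul (Measurable.mul ?_ ?_)
    · exact Finset.measurable_prod _ fun k _ =>
        (hccrmeas i j k).comp ((measurable_pi_apply k).fst)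
    · refine Measurable.ite ?_ measurable_const measurable_const
      exact measurableSet_le (((measurable_pi_apply i).fst.sub
        (measurable_pi_apply j).fst).norm) measurable_const
  -- pointwise AM-GM bound
  have hAM : ∀ (i j : Fin n), i ≠ j → ∀ x,
      Gr x ^ 2 * t i j x ≤ 2⁻¹ * Dr i j x + 2⁻¹ * Dr j i x := by
    intro i j hij x
    have hjmem : j ∈ Finset.univ.erase i :=
      Finset.mem_erase.2 ⟨hij.symm, Finset.mem_univ j⟩
    set P : ℝ := ∏ k ∈ (Finset.univ.erase i).erase j, br ((x k).1) ^ 2 with hPdef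
    have hP0 : 0 ≤ P := Finset.prod_nonneg fun k _ => sq_nonneg _
    have hsplit : (∏ k, br ((x k).1)) ^ 2
        = br ((x i).1) ^ 2 * (br ((x j).1) ^ 2 * P) := by
      rw [← Finset.prod_pow]
      rw [← Finset.mul_prod_erase Finset.univ _ (Finset.mem_univ i),
        ← Finset.mul_prod_erase _ _ hjmem]
    have hprodIJ : ∀ (i' j' : Fin n), i' ≠ j' →
        (Finset.univ.erase i').erase j' = (Finset.univ.erase i).erase j →
        (∏ k, ccr i' j' k ((x k).1)) = br ((x i').1) ^ 4 * P := by
      intro i' j' hij' hsets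
      have hj'mem : j' ∈ Finset.univ.erase i' :=
        Finset.mem_erase.2 ⟨hij'.symm, Finset.mem_univ j'⟩
      rw [← Finset.mul_prod_erase Finset.univ _ (Finset.mem_univ i'),
        ← Finset.mul_prod_erase _ _ hj'mem]
      have h1 : ccr i' j' i' ((x i').1) = br ((x i').1) ^ 4 := by
        simp [hccrdef]
      have h2 : ccr i' j' j' ((x j').1) = 1 := by
        simp [hccrdef, hij'.symm]
      rw [h1, h2, one_mul, hsets]
      congr 1
      refine Finset.prod_congr rfl fun k hk => ?_
      have hki : k ≠ i := (Finset.mem_erase.1 (Finset.mem_of_mem_erase hk)).1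
      have hkj : k ≠ j := (Finset.mem_erase.1 hk).1
      have hki' : k ≠ i' := by
        intro e
        have : k ∈ (Finset.univ.erase i').erase j' := hsets ▸ hk
        exact (Finset.mem_erase.1 (Finset.mem_of_mem_erase this)).1 e
      have hkj' : k ≠ j' := by
        intro e
        have : k ∈ (Finset.univ.erase i').erase j' := hsets ▸ hk
        exact (Finset.mem_erase.1 this).1 e
      simp [hccrdef, hki', hkj']
    have hij' : j ≠ i := hij.symm
    have hset2 : (Finset.univ.erase j).erase i = (Finset.univ.erase i).erase j := by
      rw [Finset.erase_right_comm]
    have hPi := hprodIJ i j hij rfl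
    have hPj := hprodIJ j i hij' hset2
    have hGx : Gr x ^ 2 = ψ (fun i => (x i).2) ^ 2 * (∏ k, br ((x k).1)) ^ 2 := by
      rw [hGrdef]; ring
    rw [hGx, hDrdef]
    simp only
    rw [hPi, hPj, htsymm j i x, hsplit]
    have hψ2 : (0:ℝ) ≤ ψ (fun i => (x i).2) ^ 2 := sq_nonneg _
    have htx := ht0 j i x
    nlinarith [mul_nonneg (mul_nonneg (mul_nonneg hψ2 hP0) htx)
      (sq_nonneg (br ((x i).1) ^ 2 - br ((x j).1) ^ 2))]
  -- pointwise master inequality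
  have hmaster : ∀ x, Gr x ^ 2
      ≤ (Gr x * Fr x) ^ 2 + ∑ p ∈ S, (2⁻¹ * Dr p.1 p.2 x + 2⁻¹ * Dr p.2 p.1 x) := by
    intro x
    have h2 : Gr x ^ 2 * (1 - ∑ p ∈ S, t p.1 p.2 x) ≤ Gr x ^ 2 * Fr x ^ 2 :=
      mul_le_mul_of_nonneg_left (hpoint1 x) (sq_nonneg _)
    have h3 : ∑ p ∈ S, Gr x ^ 2 * t p.1 p.2 x
        ≤ ∑ p ∈ S, (2⁻¹ * Dr p.1 p.2 x + 2⁻¹ * Dr p.2 p.1 x) := by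
      refine Finset.sum_le_sum fun p hp => ?_
      have hplt : p.1 < p.2 := by simpa [hSdef] using hp
      exact hAM p.1 p.2 (ne_of_lt hplt) x
    have h4 : Gr x ^ 2 = Gr x ^ 2 * (1 - ∑ p ∈ S, t p.1 p.2 x)
        + ∑ p ∈ S, Gr x ^ 2 * t p.1 p.2 x := by
      rw [← Finset.mul_sum]; ring
    calc Gr x ^ 2 = _ := h4
      _ ≤ Gr x ^ 2 * Fr x ^ 2 + ∑ p ∈ S, (2⁻¹ * Dr p.1 p.2 x + 2⁻¹ * Dr p.2 p.1 x) :=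
          add_le_add h2 h3
      _ = (Gr x * Fr x) ^ 2 + ∑ p ∈ S, (2⁻¹ * Dr p.1 p.2 x + 2⁻¹ * Dr p.2 p.1 x) := by
          congr 1
          simp only [hGrdef]
          ring
  -- the key factorization identity over the product space
  have hψl : (∫⁻ z : Fin n → ℝ, ENNReal.ofReal (ψ z ^ 2)) = 1 := by
    rw [← ofReal_integral_eq_lintegral_ofReal hψint
      (Filter.Eventually.of_forall fun z => sq_nonneg _), hψnorm, ENNReal.ofReal_one]
  have key : ∀ (Φ : (Fin n → EuclideanSpace ℝ (Fin 2)) → ℝ≥0∞), Measurable Φ →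
      (∫⁻ x : Fin n → EuclideanSpace ℝ (Fin 2) × ℝ,
        ENNReal.ofReal (ψ (fun i => (x i).2) ^ 2) * Φ (fun i => (x i).1)) = ∫⁻ u, Φ u := by
    intro Φ hΦ
    have mp := volume_measurePreserving_arrowProdEquivProdArrow
      (EuclideanSpace ℝ (Fin 2)) ℝ (Fin n)
    have hmeas : Measurable fun p : (Fin n → EuclideanSpace ℝ (Fin 2)) × (Fin n → ℝ) =>
        Φ p.1 * ENNReal.ofReal (ψ p.2 ^ 2) :=
      (hΦ.comp measurable_fst).mul
        (ENNReal.measurable_ofReal.comp ((hψmeas.pow_const 2).comp measurable_snd))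
    have step1 := mp.lintegral_comp hmeas
    have step0 : (∫⁻ x : Fin n → EuclideanSpace ℝ (Fin 2) × ℝ,
        ENNReal.ofReal (ψ (fun i => (x i).2) ^ 2) * Φ (fun i => (x i).1))
        = ∫⁻ a : Fin n → EuclideanSpace ℝ (Fin 2) × ℝ,
          Φ ((MeasurableEquiv.arrowProdEquivProdArrow (EuclideanSpace ℝ (Fin 2)) ℝ (Fin n)) a).1 *
          ENNReal.ofReal
            (ψ ((MeasurableEquiv.arrowProdEquivProdArrow (EuclideanSpace ℝ (Fin 2)) ℝ (Fin n)) a).2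
              ^ 2) := by
      refine lintegral_congr fun x => ?_
      simp only [MeasurableEquiv.arrowProdEquivProdArrow, MeasurableEquiv.coe_mk,
        Equiv.arrowProdEquivProdArrow, Equiv.coe_fn_mk]
      rw [mul_comm]
    have hg : Measurable fun z : Fin n → ℝ => ENNReal.ofReal (ψ z ^ 2) :=
      ENNReal.measurable_ofReal.comp (hψmeas.pow_const 2)
    rw [step0, step1, MeasureTheory.Measure.volume_eq_prod,
      lintegral_prod_mul hΦ.aemeasurable hg.aemeasurable, hψl, mul_one]
  -- the norm of G
  have hGnorm : (∫⁻ x, ENNReal.ofReal (Gr x ^ 2)) = 1 := by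
    have hΦmeas : Measurable fun u : Fin n → EuclideanSpace ℝ (Fin 2) => ∏ k, B2 (u k) :=
      Finset.measurable_prod _ fun k _ => hB2meas.comp (measurable_pi_apply k)
    have hpt : ∀ x : Fin n → EuclideanSpace ℝ (Fin 2) × ℝ, ENNReal.ofReal (Gr x ^ 2)
        = ENNReal.ofReal (ψ (fun i => (x i).2) ^ 2)
          * ((fun u : Fin n → EuclideanSpace ℝ (Fin 2) => ∏ k, B2 (u k))
            (fun i => (x i).1)) := by
      intro x
      simp only [hGrdef, hB2def, mul_pow]
      rw [ENNReal.ofReal_mul (sq_nonneg _), ← Finset.prod_pow,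
        ENNReal.ofReal_prod_of_nonneg (fun k _ => sq_nonneg _)]
    calc (∫⁻ x, ENNReal.ofReal (Gr x ^ 2))
        = ∫⁻ x : Fin n → EuclideanSpace ℝ (Fin 2) × ℝ,
            ENNReal.ofReal (ψ (fun i => (x i).2) ^ 2)
            * ((fun u : Fin n → EuclideanSpace ℝ (Fin 2) => ∏ k, B2 (u k))
              (fun i => (x i).1)) := lintegral_congr hpt
      _ = ∫⁻ u : Fin n → EuclideanSpace ℝ (Fin 2), ∏ k, B2 (u k) := key _ hΦmeas
      _ = 1 := by
          rw [volume_pi, lintegral_eq_lmarginal_univ (fun _ => (0 : EuclideanSpace ℝ (Fin 2))),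
            lmarginal_prod_aux (fun _ => B2) (fun _ => hB2meas) Finset.univ]
          simp [hB2]
  -- bound for each pair term
  have hDbound : ∀ (i j : Fin n), i ≠ j →
      (∫⁻ x, ENNReal.ofReal (Dr i j x))
        ≤ ENNReal.ofReal (Real.pi * R ^ 2) * ENNReal.ofReal (r⁻¹ ^ 2 * ∫ y, b y ^ 4) := by
    intro i j hij
    set C : Fin n → EuclideanSpace ℝ (Fin 2) → ℝ≥0∞ :=
      fun k y => ENNReal.ofReal (ccr i j k y) with hCdef
    have hCmeas : ∀ k, Measurable (C k) :=
      fun k => ENNReal.measurable_ofReal.comp (hccrmeas i j k)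
    have hCj : C j = fun _ => 1 := by
      funext y
      simp [hCdef, hccrdef, hij.symm]
    set Φ : (Fin n → EuclideanSpace ℝ (Fin 2)) → ℝ≥0∞ :=
      fun u => (∏ k, C k (u k)) * (if ‖u i - u j‖ ≤ R then 1 else 0) with hΦdef
    have hΦmeas : Measurable Φ := by
      refine (Finset.measurable_prod _ fun k _ =>
        (hCmeas k).comp (measurable_pi_apply k)).mul ?_
      refine Measurable.ite ?_ measurable_const measurable_const
      exact measurableSet_le (((measurable_pi_apply i).sub
        (measurable_pi_apply j)).norm) measurable_const
    have hpt : ∀ x : Fin n → EuclideanSpace ℝ (Fin 2) × ℝ, ENNReal.ofReal (Dr i j x)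
        = ENNReal.ofReal (ψ (fun i => (x i).2) ^ 2) * Φ (fun i => (x i).1) := by
      intro x
      simp only [hDrdef, hΦdef, hCdef]
      rw [ENNReal.ofReal_mul (sq_nonneg _),
        ENNReal.ofReal_mul (Finset.prod_nonneg fun k _ => hccr0 i j k _),
        ENNReal.ofReal_prod_of_nonneg (fun k _ => hccr0 i j k _)]
      congr 1
      congr 1
      rcases ht01 i j x with h | h <;> simp only [htdef] at h ⊢
      · rcases Classical.em (‖(x i).1 - (x j).1‖ ≤ R) with hc | hc
        · simp [hc] at h
        · simp [hc]
      · rcases Classical.em (‖(x i).1 - (x j).1‖ ≤ R) with hc | hc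
        · simp [hc]
        · simp [hc] at h
    calc (∫⁻ x, ENNReal.ofReal (Dr i j x))
        = ∫⁻ x : Fin n → EuclideanSpace ℝ (Fin 2) × ℝ,
            ENNReal.ofReal (ψ (fun i => (x i).2) ^ 2) * Φ (fun i => (x i).1) :=
          lintegral_congr hpt
      _ = ∫⁻ u, Φ u := key Φ hΦmeas
      _ ≤ ENNReal.ofReal (Real.pi * R ^ 2) * ∏ k ∈ Finset.univ.erase j, ∫⁻ y, C k y :=
          pair_bound i j hij hR.le C hCmeas hCj
      _ = ENNReal.ofReal (Real.pi * R ^ 2) * ENNReal.ofReal (r⁻¹ ^ 2 * ∫ y, b y ^ 4) := by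
          congr 1
          rw [Finset.prod_eq_single_of_mem i (Finset.mem_erase.2 ⟨hij, Finset.mem_univ i⟩)]
          · have hCi : C i = B4 := by
              funext y; simp [hCdef, hccrdef, hB4def]
            rw [hCi, hB4]
          · intro k hk hki
            have hkj : k ≠ j := (Finset.mem_erase.1 hk).1
            have hCk : C k = B2 := by
              funext y; simp [hCdef, hccrdef, hki, hkj, hB2def]
            rw [hCk, hB2]
  -- integrability of |Ψ|²
  set Ψsq : (Fin n → EuclideanSpace ℝ (Fin 2) × ℝ) → ℝ :=
    fun x => (Gr x * Fr x) ^ 2 with hΨdef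
  have hΨnn : ∀ x, 0 ≤ Ψsq x := fun x => sq_nonneg (Gr x * Fr x)
  have hΨmeas' : Measurable Ψsq := (hGrmeas.mul hFrmeas).pow_const 2
  have hΨle : ∀ x, ENNReal.ofReal (Ψsq x) ≤ ENNReal.ofReal (Gr x ^ 2) := by
    intro x
    refine ENNReal.ofReal_le_ofReal ?_
    have h1 := hF0 x; have h2 := hF1 x
    simp only [hΨdef]
    rw [mul_pow]
    exact mul_le_of_le_one_right (sq_nonneg _) (pow_le_one₀ h1 h2)
  have hΨlin : (∫⁻ x, ENNReal.ofReal (Ψsq x)) ≤ 1 := by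
    rw [← hGnorm]; exact lintegral_mono hΨle
  have hΨint2 : Integrable Ψsq := by
    refine ⟨hΨmeas'.aestronglyMeasurable, ?_⟩
    rw [hasFiniteIntegral_iff_ofReal (Filter.Eventually.of_forall hΨnn)]
    exact lt_of_le_of_lt hΨlin ENNReal.one_lt_top
  have hΨeq : (∫ x, Ψsq x) = (∫⁻ x, ENNReal.ofReal (Ψsq x)).toReal := by
    rw [integral_eq_lintegral_of_nonneg_ae (Filter.Eventually.of_forall hΨnn)
      hΨmeas'.aestronglyMeasurable]
  -- the main chain of inequalities, in ℝ≥0∞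
  set K : ℝ≥0∞ := ENNReal.ofReal (Real.pi * R ^ 2)
    * ENNReal.ofReal (r⁻¹ ^ 2 * ∫ y, b y ^ 4) with hKdef
  have h2inv : ENNReal.ofReal (2⁻¹ : ℝ) = 2⁻¹ := by
    rw [ENNReal.ofReal_inv_of_pos (by norm_num)]
    norm_num
  have hhalf : (2⁻¹ : ℝ≥0∞) + 2⁻¹ = 1 := by
    rw [← two_mul]
    exact ENNReal.mul_inv_cancel (by norm_num) (by norm_num)
  have hchain : (1 : ℝ≥0∞) ≤ (∫⁻ x, ENNReal.ofReal (Ψsq x)) + (S.card : ℝ≥0∞) * K := by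
    have h1 : (∫⁻ x, ENNReal.ofReal (Gr x ^ 2))
        ≤ ∫⁻ x, (ENNReal.ofReal (Ψsq x) + ∑ p ∈ S, (2⁻¹ * ENNReal.ofReal (Dr p.1 p.2 x)
          + 2⁻¹ * ENNReal.ofReal (Dr p.2 p.1 x))) := by
      refine lintegral_mono fun x => ?_
      refine le_trans (ENNReal.ofReal_le_ofReal (hmaster x)) (le_of_eq ?_)
      rw [ENNReal.ofReal_add (hΨnn x) (Finset.sum_nonneg fun p _ =>
        add_nonneg (mul_nonneg (by norm_num) (hDr0 p.1 p.2 x))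
          (mul_nonneg (by norm_num) (hDr0 p.2 p.1 x)))]
      congr 1
      rw [ENNReal.ofReal_sum_of_nonneg (fun p _ =>
        add_nonneg (mul_nonneg (by norm_num) (hDr0 p.1 p.2 x))
          (mul_nonneg (by norm_num) (hDr0 p.2 p.1 x)))]
      refine Finset.sum_congr rfl fun p _ => ?_
      rw [ENNReal.ofReal_add (mul_nonneg (by norm_num) (hDr0 p.1 p.2 x))
        (mul_nonneg (by norm_num) (hDr0 p.2 p.1 x)),
        ENNReal.ofReal_mul (by norm_num : (0:ℝ) ≤ 2⁻¹),
        ENNReal.ofReal_mul (by norm_num : (0:ℝ) ≤ 2⁻¹), h2inv]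
    have hDm : ∀ i j : Fin n, Measurable fun x => ENNReal.ofReal (Dr i j x) :=
      fun i j => ENNReal.measurable_ofReal.comp (hDrmeas i j)
    have h2 : (∫⁻ x, (ENNReal.ofReal (Ψsq x) + ∑ p ∈ S, (2⁻¹ * ENNReal.ofReal (Dr p.1 p.2 x)
          + 2⁻¹ * ENNReal.ofReal (Dr p.2 p.1 x))))
        = (∫⁻ x, ENNReal.ofReal (Ψsq x)) + ∑ p ∈ S,
          (2⁻¹ * (∫⁻ x, ENNReal.ofReal (Dr p.1 p.2 x))
            + 2⁻¹ * (∫⁻ x, ENNReal.ofReal (Dr p.2 p.1 x))) := by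
      have hΨm : Measurable fun x => ENNReal.ofReal (Ψsq x) :=
        ENNReal.measurable_ofReal.comp hΨmeas'
      rw [lintegral_add_left hΨm]
      congr 1
      rw [lintegral_finset_sum _ (fun p _ =>
        ((hDm p.1 p.2).const_mul 2⁻¹).add ((hDm p.2 p.1).const_mul 2⁻¹))]
      refine Finset.sum_congr rfl fun p _ => ?_
      rw [lintegral_add_left ((hDm p.1 p.2).const_mul 2⁻¹),
        lintegral_const_mul _ (hDm p.1 p.2), lintegral_const_mul _ (hDm p.2 p.1)]
    have h3 : ∑ p ∈ S, (2⁻¹ * (∫⁻ x, ENNReal.ofReal (Dr p.1 p.2 x))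
          + 2⁻¹ * (∫⁻ x, ENNReal.ofReal (Dr p.2 p.1 x))) ≤ ∑ _p ∈ S, K := by
      refine Finset.sum_le_sum fun p hp => ?_
      have hplt : p.1 < p.2 := by simpa [hSdef] using hp
      have e1 := hDbound p.1 p.2 (ne_of_lt hplt)
      have e2 := hDbound p.2 p.1 (ne_of_gt hplt)
      calc 2⁻¹ * (∫⁻ x, ENNReal.ofReal (Dr p.1 p.2 x))
            + 2⁻¹ * (∫⁻ x, ENNReal.ofReal (Dr p.2 p.1 x))
          ≤ 2⁻¹ * K + 2⁻¹ * K := add_le_add (mul_le_mul_right e1 _) (mul_le_mul_right e2 _)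
        _ = K := by rw [← add_mul, hhalf, one_mul]
    calc (1 : ℝ≥0∞) = ∫⁻ x, ENNReal.ofReal (Gr x ^ 2) := hGnorm.symm
      _ ≤ _ := h1
      _ = _ := h2
      _ ≤ (∫⁻ x, ENNReal.ofReal (Ψsq x)) + ∑ _p ∈ S, K := add_le_add le_rfl h3
      _ = (∫⁻ x, ENNReal.ofReal (Ψsq x)) + (S.card : ℝ≥0∞) * K := by
          rw [Finset.sum_const, nsmul_eq_mul]
  -- pass to real numbers
  have hb4nn : (0:ℝ) ≤ ∫ y, b y ^ 4 := integral_nonneg fun y => by positivity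
  have hKtoReal : K.toReal = Real.pi * R ^ 2 * (r⁻¹ ^ 2 * ∫ y, b y ^ 4) := by
    rw [hKdef, ENNReal.toReal_mul, ENNReal.toReal_ofReal (by positivity),
      ENNReal.toReal_ofReal (by positivity)]
  have hKne : K ≠ ⊤ := by
    rw [hKdef]; exact ENNReal.mul_ne_top ENNReal.ofReal_ne_top ENNReal.ofReal_ne_top
  have hAne : (∫⁻ x, ENNReal.ofReal (Ψsq x)) ≠ ⊤ :=
    (lt_of_le_of_lt hΨlin ENNReal.one_lt_top).ne
  have hNKne : (S.card : ℝ≥0∞) * K ≠ ⊤ :=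
    ENNReal.mul_ne_top (ENNReal.natCast_ne_top _) hKne
  have hfinal : (1:ℝ) ≤ (∫⁻ x, ENNReal.ofReal (Ψsq x)).toReal + (S.card : ℝ) * K.toReal := by
    have h := ENNReal.toReal_mono (ENNReal.add_ne_top.2 ⟨hAne, hNKne⟩) hchain
    rw [ENNReal.toReal_one, ENNReal.toReal_add hAne hNKne, ENNReal.toReal_mul] at h
    simpa using h
  have hcard : ((S.card : ℕ) : ℝ) = (n : ℝ) * ((n : ℝ) - 1) / 2 := by
    have h := two_mul_card_pairs n
    have hnn : n ≤ n * n := by nlinarith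
    have h' : 2 * S.card + n = n * n := by
      rw [hSdef] at *
      omega
    have h'' : (2:ℝ) * (S.card : ℝ) + (n:ℝ) = (n:ℝ) * (n:ℝ) := by exact_mod_cast h'
    linear_combination h'' / 2
  have hgoalint : (∫ x : Fin n → EuclideanSpace ℝ (Fin 2) × ℝ,
      ((ψ (fun i => (x i).2) * ∏ i, r⁻¹ * b (r⁻¹ • (x i).1)) *
        ∏ i, ∏ j, (if i < j then
          f (Real.sqrt (‖(x i).1 - (x j).1‖ ^ 2 + ((x i).2 - (x j).2) ^ 2))
        else 1)) ^ 2) = ∫ x, Ψsq x := rfl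
  rw [hgoalint, hΨeq]
  have hKC : (S.card : ℝ) * K.toReal
      = ((n : ℝ) * ((n : ℝ) - 1) / 2) * (Real.pi * R ^ 2 / r ^ 2) * (∫ y, b y ^ 4) := by
    rw [hKtoReal, hcard]; ring
  linarith [hfinal, hKC.symm.le, hKC.le]
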